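/- In the setting of the direct sum decomposition E = ⊕_i (L_i ⊕ L_i^⊥) ⊕ G with L_i lines, the map Φ sending a tuple of linear maps (A_2,...,A_k) with A_i : L_i → Σ_{j=1}^{i-1} L_j^⊥ to the subspace Σ_{i=1}^k Γ_{A_i} (with A_1 = 0) is injective. -/

import Mathlib

/-- In the direct sum `E = ⊕_i (L_i ⊕ L_i^⊥) ⊕ G` with `L_i` lines, the map `Φ`
sending a tuple of linear maps `A_i : L_i → Σ_{j<i} L_j^⊥` to the subspace
`Σ_{i=1}^k Γ_{A_i}` is injective. -/
theorem stmt_7 (k : ℕ) (E : Type*) [AddCommGroup E] [Module ℂ E] [FiniteDimensional ℂ E]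
    (L : Fin k → Submodule ℂ E) (Lp : Fin (k + 1) → Submodule ℂ E)
    (hInt : DirectSum.IsInternal (Sum.elim L Lp))
    (hL1 : ∀ i, Module.finrank ℂ (L i) = 1)
    (A A' : Fin k → (E →ₗ[ℂ] E))
    (hA : ∀ i : Fin k, ∀ v ∈ L i, A i v ∈
      (⨆ p : Fin (k + 1), ⨆ _ : (p : ℕ) < (i : ℕ), Lp p))
    (hA' : ∀ i : Fin k, ∀ v ∈ L i, A' i v ∈
      (⨆ p : Fin (k + 1), ⨆ _ : (p : ℕ) < (i : ℕ), Lp p))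
    (heq : (⨆ i : Fin k, Submodule.map (LinearMap.id + A i) (L i))
         = (⨆ i : Fin k, Submodule.map (LinearMap.id + A' i) (L i))) :
    ∀ i : Fin k, ∀ v ∈ L i, A i v = A' i v := by
  classical
  set F : Fin k ⊕ Fin (k + 1) → Submodule ℂ E := Sum.elim L Lp with hF
  let e := LinearEquiv.ofBijective (DirectSum.coeLinearMap F) hInt
  let π : Fin k → E →ₗ[ℂ] E := fun j =>
    (F (Sum.inl j)).subtype ∘ₗ
      (DirectSum.component ℂ _ (fun c => F c) (Sum.inl j)) ∘ₗ (e.symm : E →ₗ[ℂ] _)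
  have hπ_mem : ∀ j : Fin k, ∀ x ∈ L j, π j x = x := by
    intro j x hx
    have : (e.symm x) (Sum.inl j) = ⟨x, hx⟩ :=
      hInt.ofBijective_coeLinearMap_of_mem (i := Sum.inl j) hx
    exact congrArg Subtype.val this
  have hπ_ne : ∀ j j' : Fin k, j ≠ j' → ∀ x ∈ L j', π j x = 0 := by
    intro j j' hne x hx
    have : (e.symm x) (Sum.inl j) = 0 :=
      hInt.ofBijective_coeLinearMap_of_mem_ne (i := Sum.inl j') (j := Sum.inl j)
        (by simpa using (Ne.symm hne)) hx
    exact congrArg Subtype.val this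
  have hπ_Lp : ∀ j : Fin k, ∀ p : Fin (k + 1), ∀ x ∈ Lp p, π j x = 0 := by
    intro j p x hx
    have : (e.symm x) (Sum.inl j) = 0 :=
      hInt.ofBijective_coeLinearMap_of_mem_ne (i := Sum.inr p) (j := Sum.inl j)
        (by simp) hx
    exact congrArg Subtype.val this
  have hπ_sup : ∀ j : Fin k, ∀ i : Fin k, ∀ x ∈
      (⨆ p : Fin (k + 1), ⨆ _ : (p : ℕ) < (i : ℕ), Lp p), π j x = 0 := by
    intro j i x hx
    have hle : (⨆ p : Fin (k + 1), ⨆ _ : (p : ℕ) < (i : ℕ), Lp p) ≤ LinearMap.ker (π j) := by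
      refine iSup_le fun p => iSup_le fun _ => fun y hy => ?_
      exact LinearMap.mem_ker.mpr (hπ_Lp j p y hy)
    exact LinearMap.mem_ker.mp (hle hx)
  intro i v hv
  have hmem : v + A i v ∈ (⨆ j : Fin k, Submodule.map (LinearMap.id + A' j) (L j)) := by
    rw [← heq]
    refine le_iSup (fun j : Fin k => Submodule.map (LinearMap.id + A j) (L j)) i ?_
    exact ⟨v, hv, by simp⟩
  obtain ⟨f, hf, hfsum⟩ := (Submodule.mem_iSup_iff_exists_finsupp _ _).mp hmem
  -- choose u j with u j ∈ L j and f j = u j + A' j (u j)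
  have hch : ∀ j : Fin k, ∃ u ∈ L j, u + A' j u = f j := by
    intro j
    obtain ⟨u, hu, hu2⟩ := hf j
    exact ⟨u, hu, by simpa using hu2⟩
  choose u hu hu2 using hch
  -- compute π j applied to both sides
  have key : ∀ j : Fin k, u j = if j = i then v else 0 := by
    intro j
    have h1 : π j (v + A i v) = if j = i then v else 0 := by
      rw [map_add, hπ_sup j i _ (hA i v hv)]
      rcases eq_or_ne j i with rfl | hne
      · simp [hπ_mem j v hv]
      · simp [hne, hπ_ne j i hne v hv]
    have h2 : π j (v + A i v) = u j := by
      rw [← hfsum, map_finsuppSum]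
      have hterm : ∀ j' : Fin k, π j (f j') = if j' = j then u j' else 0 := by
        intro j'
        rw [← hu2 j', map_add, hπ_sup j j' _ (hA' j' (u j') (hu j'))]
        rcases eq_or_ne j' j with rfl | hne
        · rw [if_pos rfl, add_zero]; exact hπ_mem _ _ (hu _)
        · rw [if_neg hne, add_zero]; exact hπ_ne _ _ (Ne.symm hne) _ (hu _)
      rw [Finsupp.sum_fintype _ _ (fun _ => map_zero _)]
      rw [Finset.sum_congr rfl (fun j' _ => hterm j')]
      simp
    rw [h1] at h2
    exact h2.symm
  have hsum2 : v + A i v = v + A' i v := by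
    rw [← hfsum, Finsupp.sum_fintype _ _ (fun _ => rfl)]
    have : ∀ j : Fin k, f j = if j = i then v + A' i v else 0 := by
      intro j
      rw [← hu2 j, key j]
      rcases eq_or_ne j i with rfl | hne
      · simp
      · simp [hne]
    rw [Finset.sum_congr rfl (fun j _ => this j)]
    simp
  exact add_left_cancel hsum2
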